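/- arXiv:1708.01109 — 2 statements merged into one kernel-verified Lean document; each statement's English description precedes it below -/
import Mathlib

section
/- Let M and N be von Neumann algebras on complex Hilbert spaces H and K respectively, let Ω ∈ H and Λ ∈ K be unit vectors cyclic for M and N respectively (i.e. MΩ is dense in H and NΛ is dense in K), and define the states μ(a) = ⟨Ω, aΩ⟩ on M and ν(b) = ⟨Λ, bΛ⟩ on N. Assume ν is faithful. If η : M → N is a positive linear map such that ν(η(a)*η(a)) ≤ μ(a*a) for all a ∈ M, then η is normal, i.e. σ-weakly continuous. -/
open scoped ComplexOrder

noncomputable section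

set_option maxHeartbeats 4000000
set_option synthInstance.maxHeartbeats 1000000

variable {H K : Type} [NormedAddCommGroup H] [InnerProductSpace ℂ H] [CompleteSpace H]
  [NormedAddCommGroup K] [InnerProductSpace ℂ K] [CompleteSpace K]

noncomputable instance (A : VonNeumannAlgebra H) : Algebra ℂ ↥A :=
  inferInstanceAs (Algebra ℂ ↥A.toStarSubalgebra)

/-- `x ≤ y` in the operator (Loewner) order on `B(H)`. -/
def OpLE (x y : H →L[ℂ] H) : Prop := ∀ ξ : H, 0 ≤ (inner ℂ ξ ((y - x) ξ) : ℂ)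

/-- `s` is the least upper bound of the set `S ⊆ B(H)` for the operator order. -/
def IsOpLUB (S : Set (H →L[ℂ] H)) (s : H →L[ℂ] H) : Prop :=
  (∀ x ∈ S, OpLE x s) ∧ ∀ t : H →L[ℂ] H, (∀ x ∈ S, OpLE x t) → OpLE s t

/-- A positive map between von Neumann algebras is normal (σ-weakly continuous) if and only
if it preserves suprema of increasing nets of self-adjoint elements that are bounded above
(i.e. possess a least upper bound in the operator order); we use this as the definition. -/
def IsNormalMap {M : VonNeumannAlgebra H} {N : VonNeumannAlgebra K} (η : ↥M → ↥N) : Prop :=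
  ∀ (ι : Type) (le : ι → ι → Prop), Nonempty ι →
    (∀ i j : ι, ∃ k, le i k ∧ le j k) →
    ∀ (a : ι → ↥M) (s : ↥M),
      (∀ i, IsSelfAdjoint ((a i : H →L[ℂ] H))) →
      (∀ i j, le i j → OpLE (a i : H →L[ℂ] H) (a j : H →L[ℂ] H)) →
      IsOpLUB (Set.range fun i => ((a i : H →L[ℂ] H))) (s : H →L[ℂ] H) →
      IsOpLUB (Set.range fun i => ((η (a i) : K →L[ℂ] K))) (η s : K →L[ℂ] K)

/-! ### Auxiliary machinery -/

namespace NormalAux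

open ContinuousLinearMap Filter InnerProductSpace Topology

variable {E : Type} [NormedAddCommGroup E] [InnerProductSpace ℂ E] [CompleteSpace E]

local notation "⟪" x ", " y "⟫" => (inner ℂ x y : ℂ)

lemma complex_nonneg_iff {z : ℂ} : 0 ≤ z ↔ 0 ≤ z.re ∧ z.im = 0 := by
  rw [Complex.nonneg_iff]; exact and_congr Iff.rfl eq_comm

lemma opLE_iff_le {x y : E →L[ℂ] E} : OpLE x y ↔ x ≤ y := by
  rw [ContinuousLinearMap.le_def, ContinuousLinearMap.isPositive_iff_complex]
  unfold OpLE
  refine forall_congr' fun ξ => ?_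
  have hc : ⟪(y - x) ξ, ξ⟫ = (starRingEnd ℂ) ⟪ξ, (y - x) ξ⟫ := (inner_conj_symm _ _).symm
  rw [hc]
  set z := ⟪ξ, (y - x) ξ⟫ with hz
  rw [complex_nonneg_iff]
  simp only [RCLike.re_to_complex, Complex.conj_re, Complex.conj_im]
  constructor
  · rintro ⟨h1, h2⟩
    refine ⟨?_, h1⟩
    apply Complex.ext <;> simp [h2]
  · rintro ⟨h1, h2⟩
    refine ⟨h2, ?_⟩
    have := congrArg Complex.im h1
    simpa using this.symm
-- note: need to double-check sign conventions above during compilation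

lemma nonneg_iff_inner {T : E →L[ℂ] E} : (0 : E →L[ℂ] E) ≤ T ↔ ∀ ξ : E, 0 ≤ ⟪ξ, T ξ⟫ := by
  rw [← opLE_iff_le]
  unfold OpLE
  simp

lemma re_form_mono {x y : E →L[ℂ] E} (h : x ≤ y) (ξ : E) :
    (⟪ξ, x ξ⟫).re ≤ (⟪ξ, y ξ⟫).re := by
  have h1 := opLE_iff_le.mpr h ξ
  rw [ContinuousLinearMap.sub_apply, inner_sub_right] at h1
  have := (complex_nonneg_iff.mp h1).1
  rw [Complex.sub_re] at this
  linarith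

lemma form_real_of_nonneg {x : E →L[ℂ] E} (hx : (0:E →L[ℂ] E) ≤ x) (ξ : E) :
    ⟪ξ, x ξ⟫ = (((⟪ξ, x ξ⟫).re : ℝ) : ℂ) := by
  have := complex_nonneg_iff.mp (nonneg_iff_inner.mp hx ξ)
  exact (Complex.ext (by simp) (by simp [this.2])).symm

lemma form_nonneg_of_nonneg {x : E →L[ℂ] E} (hx : (0:E →L[ℂ] E) ≤ x) (ξ : E) :
    0 ≤ (⟪ξ, x ξ⟫).re :=
  (complex_nonneg_iff.mp (nonneg_iff_inner.mp hx ξ)).1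

lemma re_inner_self (x : E) : (⟪x, x⟫).re = ‖x‖ ^ 2 := by
  have := inner_self_eq_norm_sq (𝕜 := ℂ) x
  simpa using this

lemma re_le_norm' (z : ℂ) : z.re ≤ ‖z‖ := by
  simpa using RCLike.re_le_norm z

lemma mul_self_le_norm_smul {a : E →L[ℂ] E} (ha : (0:E →L[ℂ] E) ≤ a) : a * a ≤ ‖a‖ • a := by
  have hss : CFC.sqrt a * CFC.sqrt a = a := CFC.sqrt_mul_sqrt_self a ha
  set s := CFC.sqrt a with hsdef
  have h1 := CStarAlgebra.star_left_conjugate_le_norm_smul (a := s) (b := a) (IsSelfAdjoint.of_nonneg ha)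
  have hs : star s = s := (IsSelfAdjoint.of_nonneg (CFC.sqrt_nonneg (a := a))).star_eq
  rw [hs, hss] at h1
  calc a * a = s * a * s := by rw [← hss]; noncomm_ring
    _ ≤ ‖a‖ • a := h1

lemma apply_norm_sq_le {T : E →L[ℂ] E} (hT : (0:E →L[ℂ] E) ≤ T) (ξ : E) :
    ‖T ξ‖ ^ 2 ≤ ‖T‖ * (⟪ξ, T ξ⟫).re := by
  have hsa : IsSelfAdjoint T := ((ContinuousLinearMap.nonneg_iff_isPositive T).mp hT).isSelfAdjoint
  have h2 : T * T ≤ ‖T‖ • T := mul_self_le_norm_smul hT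
  have h3 := re_form_mono h2 ξ
  have h4 : ⟪ξ, (T * T) ξ⟫ = ⟪T ξ, T ξ⟫ := by
    rw [ContinuousLinearMap.mul_apply, ← ContinuousLinearMap.adjoint_inner_left, hsa.adjoint_eq]
  have h5 : ⟪ξ, (‖T‖ • T) ξ⟫ = (‖T‖ : ℂ) * ⟪ξ, T ξ⟫ := by
    rw [ContinuousLinearMap.smul_apply, RCLike.real_smul_eq_coe_smul (K := ℂ), inner_smul_right]
    rfl
  rw [h4, h5] at h3
  have h6 : (⟪T ξ, T ξ⟫).re = ‖T ξ‖ ^ 2 := re_inner_self (T ξ)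
  rw [h6] at h3
  refine le_trans h3 ?_
  rw [Complex.mul_re]
  have h7 : (⟪ξ, T ξ⟫).im = 0 := by
    have := form_real_of_nonneg hT ξ
    rw [this]; simp
  simp [h7]

lemma norm_le_of_le {x y : E →L[ℂ] E} (hx : (0:E →L[ℂ] E) ≤ x) (h : x ≤ y) : ‖x‖ ≤ ‖y‖ :=
  CStarAlgebra.norm_le_norm_of_nonneg_of_le hx h


lemma le_iff_sub_nonneg' {x y : E →L[ℂ] E} : x ≤ y ↔ (0:E →L[ℂ] E) ≤ y - x := by
  rw [ContinuousLinearMap.le_def, ContinuousLinearMap.le_def, sub_zero]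

lemma sub_le_sub_right' {x y : E →L[ℂ] E} (h : x ≤ y) (z : E →L[ℂ] E) : x - z ≤ y - z := by
  rw [ContinuousLinearMap.le_def] at h ⊢
  rw [show y - z - (x - z) = y - x from by abel]
  exact h

lemma sub_le_sub_iff_right' {x y z : E →L[ℂ] E} : x - z ≤ y - z ↔ x ≤ y := by
  rw [ContinuousLinearMap.le_def, ContinuousLinearMap.le_def,
    show y - z - (x - z) = y - x from by abel]

lemma sub_le_sub_left' {x y : E →L[ℂ] E} (h : x ≤ y) (z : E →L[ℂ] E) : z - y ≤ z - x := by
  rw [ContinuousLinearMap.le_def] at h ⊢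
  rw [show z - x - (z - y) = y - x from by abel]
  exact h

lemma sub_le_iff_le_add' {x y z : E →L[ℂ] E} : x - z ≤ y ↔ x ≤ y + z := by
  rw [ContinuousLinearMap.le_def, ContinuousLinearMap.le_def,
    show y - (x - z) = y + z - x from by abel]

/-- The "up-set" of `x` inside `S`. -/
def upIn (S : Set (E →L[ℂ] E)) (x : E →L[ℂ] E) : Set (E →L[ℂ] E) := {y ∈ S | x ≤ y}

/-- The filter of tails of the net indexed by the directed set `S`. -/
def opNetFilter (S : Set (E →L[ℂ] E)) : Filter (E →L[ℂ] E) :=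
  ⨅ x ∈ S, Filter.principal (upIn S x)

lemma upIn_mem_opNetFilter {S : Set (E →L[ℂ] E)} {x : E →L[ℂ] E} (hx : x ∈ S) :
    upIn S x ∈ opNetFilter S := by
  unfold opNetFilter
  exact Filter.mem_iInf_of_mem x (Filter.mem_iInf_of_mem hx (Filter.mem_principal_self _))

lemma self_mem_opNetFilter {S : Set (E →L[ℂ] E)} (hne : S.Nonempty) : S ∈ opNetFilter S := by
  obtain ⟨x, hx⟩ := hne
  exact Filter.mem_of_superset (upIn_mem_opNetFilter hx) fun y hy => hy.1

lemma opNetFilter_neBot {S : Set (E →L[ℂ] E)} (hne : S.Nonempty)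
    (hdir : ∀ x ∈ S, ∀ y ∈ S, ∃ z ∈ S, x ≤ z ∧ y ≤ z) : (opNetFilter S).NeBot := by
  have : Nonempty ↥S := hne.to_subtype
  have h : opNetFilter S = ⨅ x : S, Filter.principal (upIn S ↑x) := by
    rw [opNetFilter, iInf_subtype]
  rw [h]
  refine Filter.iInf_neBot_of_directed' ?_ ?_
  · rintro ⟨x, hx⟩ ⟨y, hy⟩
    obtain ⟨z, hz, hxz, hyz⟩ := hdir x hx y hy
    refine ⟨⟨z, hz⟩, ?_, ?_⟩ <;> refine Filter.principal_mono.mpr fun w hw => ⟨hw.1, ?_⟩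
    · exact hxz.trans hw.2
    · exact hyz.trans hw.2
  · rintro ⟨x, hx⟩
    exact Filter.principal_neBot_iff.mpr ⟨x, hx, le_refl x⟩

/-- Every norm-bounded increasing directed family of nonneg operators has a least upper
bound, which is also its weak-operator-topology limit. -/
theorem exists_opLUB (S : Set (E →L[ℂ] E)) (hne : S.Nonempty)
    (hdir : ∀ x ∈ S, ∀ y ∈ S, ∃ z ∈ S, x ≤ z ∧ y ≤ z)
    (hpos : ∀ x ∈ S, (0:E →L[ℂ] E) ≤ x) (u : E →L[ℂ] E) (hu : ∀ x ∈ S, x ≤ u) :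
    ∃ T : E →L[ℂ] E, (0:E →L[ℂ] E) ≤ T ∧ (∀ x ∈ S, x ≤ T) ∧
      (∀ t : E →L[ℂ] E, (∀ x ∈ S, x ≤ t) → T ≤ t) ∧
      (∀ ξ ζ : E, Tendsto (fun y : E →L[ℂ] E => ⟪ξ, y ζ⟫) (opNetFilter S) (𝓝 ⟪ξ, T ζ⟫)) ∧
      (∀ ξ : E, ∀ ε : ℝ, 0 < ε → ∃ x ∈ S, (⟪ξ, T ξ⟫).re - (⟪ξ, x ξ⟫).re < ε) := by
  haveI hNB : (opNetFilter S).NeBot := opNetFilter_neBot hne hdir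
  set F := opNetFilter S with hF
  have hbddA : ∀ ξ : E, BddAbove ((fun x : E →L[ℂ] E => (⟪ξ, x ξ⟫).re) '' S) := by
    intro ξ
    refine ⟨(⟪ξ, u ξ⟫).re, ?_⟩
    rintro r ⟨x, hx, rfl⟩
    exact re_form_mono (hu x hx) ξ
  have hneim : ∀ ξ : E, ((fun x : E →L[ℂ] E => (⟪ξ, x ξ⟫).re) '' S).Nonempty :=
    fun ξ => hne.image _
  set d : E → ℝ := fun ξ => sSup ((fun x : E →L[ℂ] E => (⟪ξ, x ξ⟫).re) '' S) with hd
  have hd_le : ∀ (ξ : E), ∀ x ∈ S, (⟪ξ, x ξ⟫).re ≤ d ξ :=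
    fun ξ x hx => le_csSup (hbddA ξ) ⟨x, hx, rfl⟩
  have hd_ub : ∀ (ξ : E) (t : E →L[ℂ] E), (∀ x ∈ S, x ≤ t) → d ξ ≤ (⟪ξ, t ξ⟫).re := by
    intro ξ t ht
    refine csSup_le (hneim ξ) ?_
    rintro r ⟨x, hx, rfl⟩
    exact re_form_mono (ht x hx) ξ
  -- convergence of the real diagonal values
  have hre : ∀ ξ : E, Tendsto (fun y : E →L[ℂ] E => (⟪ξ, y ξ⟫).re) F (𝓝 (d ξ)) := by
    intro ξ
    rw [tendsto_order]
    constructor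
    · intro b hb
      obtain ⟨r, ⟨x, hx, rfl⟩, hbr⟩ := exists_lt_of_lt_csSup (hneim ξ) hb
      filter_upwards [upIn_mem_opNetFilter hx] with y hy
      exact lt_of_lt_of_le hbr (re_form_mono hy.2 ξ)
    · intro b hb
      filter_upwards [self_mem_opNetFilter hne] with y hy
      exact lt_of_le_of_lt (hd_le ξ y hy) hb
  have him0 : ∀ x ∈ S, ∀ ξ : E, ⟪ξ, x ξ⟫ = (((⟪ξ, x ξ⟫).re : ℝ) : ℂ) :=
    fun x hx ξ => form_real_of_nonneg (hpos x hx) ξ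
  have hdiag : ∀ ξ : E, Tendsto (fun y : E →L[ℂ] E => ⟪ξ, y ξ⟫) F (𝓝 ((d ξ : ℝ) : ℂ)) := by
    intro ξ
    have h1 : Tendsto (fun y : E →L[ℂ] E => (((⟪ξ, y ξ⟫).re : ℝ) : ℂ)) F (𝓝 ((d ξ : ℝ) : ℂ)) :=
      (Complex.continuous_ofReal.tendsto _).comp (hre ξ)
    refine h1.congr' ?_
    filter_upwards [self_mem_opNetFilter hne] with y hy
    exact (him0 y hy ξ).symm
  have hdiag' : ∀ ξ : E, Tendsto (fun y : E →L[ℂ] E => ⟪y ξ, ξ⟫) F (𝓝 ((d ξ : ℝ) : ℂ)) := by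
    intro ξ
    have h2 : Tendsto (fun y : E →L[ℂ] E => (starRingEnd ℂ) ⟪ξ, y ξ⟫) F
        (𝓝 ((starRingEnd ℂ) ((d ξ : ℝ) : ℂ))) := (Complex.continuous_conj.tendsto _).comp (hdiag ξ)
    have h3 : (starRingEnd ℂ) ((d ξ : ℝ) : ℂ) = ((d ξ : ℝ) : ℂ) := Complex.conj_ofReal _
    rw [h3] at h2
    exact h2.congr fun y => inner_conj_symm (y ξ) ξ
  -- existence of all weak limits
  have hoff : ∀ ξ ζ : E, ∃ c : ℂ, Tendsto (fun y : E →L[ℂ] E => ⟪ξ, y ζ⟫) F (𝓝 c) := by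
    intro ξ ζ
    have hpol : ∀ y : E →L[ℂ] E, ⟪y ζ, ξ⟫ =
        (⟪y (ξ + ζ), ξ + ζ⟫ - ⟪y (ξ - ζ), ξ - ζ⟫ +
          Complex.I * ⟪y (ξ + Complex.I • ζ), ξ + Complex.I • ζ⟫ -
          Complex.I * ⟪y (ξ - Complex.I • ζ), ξ - Complex.I • ζ⟫) / 4 := by
      intro y
      have := inner_map_polarization (↑y : E →ₗ[ℂ] E) ξ ζ
      simpa only [ContinuousLinearMap.coe_coe] using this
    have hlim : Tendsto (fun y : E →L[ℂ] E =>
        (⟪y (ξ + ζ), ξ + ζ⟫ - ⟪y (ξ - ζ), ξ - ζ⟫ +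
          Complex.I * ⟪y (ξ + Complex.I • ζ), ξ + Complex.I • ζ⟫ -
          Complex.I * ⟪y (ξ - Complex.I • ζ), ξ - Complex.I • ζ⟫) / 4) F
        (𝓝 ((((d (ξ + ζ) : ℝ) : ℂ) - ((d (ξ - ζ) : ℝ) : ℂ) +
          Complex.I * ((d (ξ + Complex.I • ζ) : ℝ) : ℂ) -
          Complex.I * ((d (ξ - Complex.I • ζ) : ℝ) : ℂ)) / 4)) := by
      exact ((((hdiag' (ξ + ζ)).sub (hdiag' (ξ - ζ))).add
        (tendsto_const_nhds.mul (hdiag' (ξ + Complex.I • ζ)))).sub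
        (tendsto_const_nhds.mul (hdiag' (ξ - Complex.I • ζ)))).div_const 4
    have h3 := hlim.congr fun y => (hpol y).symm
    have h4 := (Complex.continuous_conj.tendsto _).comp h3
    exact ⟨_, h4.congr fun y => inner_conj_symm ξ (y ζ)⟩
  choose L hL using hoff
  have hLdiag : ∀ ξ : E, L ξ ξ = ((d ξ : ℝ) : ℂ) :=
    fun ξ => tendsto_nhds_unique (hL ξ ξ) (hdiag ξ)
  have hnorm_y : ∀ y ∈ S, ‖y‖ ≤ ‖u‖ := fun y hy => norm_le_of_le (hpos y hy) (hu y hy)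
  have hLbound : ∀ ξ ζ : E, ‖L ξ ζ‖ ≤ ‖u‖ * ‖ξ‖ * ‖ζ‖ := by
    intro ξ ζ
    refine le_of_tendsto (hL ξ ζ).norm ?_
    filter_upwards [self_mem_opNetFilter hne] with y hy
    calc ‖⟪ξ, y ζ⟫‖ ≤ ‖ξ‖ * ‖y ζ‖ := norm_inner_le_norm _ _
      _ ≤ ‖ξ‖ * (‖y‖ * ‖ζ‖) := by
          refine mul_le_mul_of_nonneg_left (y.le_opNorm ζ) (norm_nonneg ξ)
      _ ≤ ‖ξ‖ * (‖u‖ * ‖ζ‖) := by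
          refine mul_le_mul_of_nonneg_left ?_ (norm_nonneg ξ)
          exact mul_le_mul_of_nonneg_right (hnorm_y y hy) (norm_nonneg ζ)
      _ = ‖u‖ * ‖ξ‖ * ‖ζ‖ := by ring
  have hLadd : ∀ ξ ζ₁ ζ₂ : E, L ξ (ζ₁ + ζ₂) = L ξ ζ₁ + L ξ ζ₂ := by
    intro ξ ζ₁ ζ₂
    refine tendsto_nhds_unique (hL ξ (ζ₁ + ζ₂)) ?_
    refine ((hL ξ ζ₁).add (hL ξ ζ₂)).congr fun y => ?_
    rw [← inner_add_right, ← map_add]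
  have hLsmul : ∀ (ξ : E) (c : ℂ) (ζ : E), L ξ (c • ζ) = c * L ξ ζ := by
    intro ξ c ζ
    refine tendsto_nhds_unique (hL ξ (c • ζ)) ?_
    refine ((hL ξ ζ).const_mul c).congr fun y => ?_
    rw [← inner_smul_right, ← map_smul]
  have hLaddl : ∀ ξ₁ ξ₂ ζ : E, L (ξ₁ + ξ₂) ζ = L ξ₁ ζ + L ξ₂ ζ := by
    intro ξ₁ ξ₂ ζ
    refine tendsto_nhds_unique (hL (ξ₁ + ξ₂) ζ) ?_
    refine ((hL ξ₁ ζ).add (hL ξ₂ ζ)).congr fun y => ?_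
    rw [← inner_add_left]
  have hLsmull : ∀ (c : ℂ) (ξ ζ : E), L (c • ξ) ζ = (starRingEnd ℂ) c * L ξ ζ := by
    intro c ξ ζ
    refine tendsto_nhds_unique (hL (c • ξ) ζ) ?_
    refine ((hL ξ ζ).const_mul _).congr fun y => ?_
    rw [← inner_smul_left]
  -- construct the operator T via the Riesz representation
  set φ : E → (E →L[ℂ] ℂ) := fun ζ => LinearMap.mkContinuous
    { toFun := fun w => (starRingEnd ℂ) (L w ζ)
      map_add' := fun w₁ w₂ => by rw [hLaddl, map_add]
      map_smul' := fun c w => by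
        rw [hLsmull]; simp }
    (‖u‖ * ‖ζ‖)
    (fun w => by
      show ‖(starRingEnd ℂ) (L w ζ)‖ ≤ ‖u‖ * ‖ζ‖ * ‖w‖
      rw [show ‖(starRingEnd ℂ) (L w ζ)‖ = ‖L w ζ‖ from RCLike.norm_conj _]
      calc ‖L w ζ‖ ≤ ‖u‖ * ‖w‖ * ‖ζ‖ := hLbound w ζ
        _ = ‖u‖ * ‖ζ‖ * ‖w‖ := by ring) with hφ
  set Tf : E → E := fun ζ => (InnerProductSpace.toDual ℂ E).symm (φ ζ) with hTfdef
  have hTf : ∀ w ζ : E, ⟪w, Tf ζ⟫ = L w ζ := by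
    intro w ζ
    have h1 : ⟪Tf ζ, w⟫ = (starRingEnd ℂ) (L w ζ) := by
      rw [hTfdef]
      exact InnerProductSpace.toDual_symm_apply
    rw [← inner_conj_symm w (Tf ζ)]  -- ⟪w, Tf ζ⟫ appears as conj ⟪Tf ζ, w⟫ ?
    rw [h1, Complex.conj_conj]
  have hTadd : ∀ ζ₁ ζ₂ : E, Tf (ζ₁ + ζ₂) = Tf ζ₁ + Tf ζ₂ := by
    intro ζ₁ ζ₂
    refine ext_inner_left ℂ fun w => ?_
    rw [hTf, inner_add_right, hTf, hTf, hLadd]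
  have hTsmul : ∀ (c : ℂ) (ζ : E), Tf (c • ζ) = c • Tf ζ := by
    intro c ζ
    refine ext_inner_left ℂ fun w => ?_
    rw [hTf, inner_smul_right, hTf, hLsmul]
  have hTbound : ∀ ζ : E, ‖Tf ζ‖ ≤ ‖u‖ * ‖ζ‖ := by
    intro ζ
    rcases eq_or_lt_of_le (norm_nonneg (Tf ζ)) with h0 | h0
    · rw [← h0]; positivity
    · have h1 : (⟪Tf ζ, Tf ζ⟫).re = ‖Tf ζ‖ ^ 2 := re_inner_self (Tf ζ)
      have h2 : ‖Tf ζ‖ ^ 2 ≤ ‖u‖ * ‖Tf ζ‖ * ‖ζ‖ := by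
        calc ‖Tf ζ‖ ^ 2 = (L (Tf ζ) ζ).re := by rw [hTf (Tf ζ) ζ] at h1; linarith
          _ ≤ ‖L (Tf ζ) ζ‖ := re_le_norm' _
          _ ≤ ‖u‖ * ‖Tf ζ‖ * ‖ζ‖ := hLbound (Tf ζ) ζ
      nlinarith [h2, h0]
  set Tlin : E →ₗ[ℂ] E :=
    { toFun := Tf
      map_add' := hTadd
      map_smul' := fun c ζ => hTsmul c ζ } with hTlin
  set T : E →L[ℂ] E := LinearMap.mkContinuous Tlin ‖u‖
    (fun ζ => by exact hTbound ζ) with hT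
  have hT_app : ∀ ζ : E, T ζ = Tf ζ := fun ζ => rfl
  have hT_inner : ∀ w ζ : E, ⟪w, T ζ⟫ = L w ζ := by
    intro w ζ; rw [hT_app]; exact hTf w ζ
  have h_inner_T : ∀ ξ : E, ⟪ξ, T ξ⟫ = ((d ξ : ℝ) : ℂ) := by
    intro ξ; rw [hT_inner, hLdiag]
  -- T is an upper bound
  have hle : ∀ x ∈ S, x ≤ T := by
    intro x hx
    rw [← opLE_iff_le]
    intro ξ
    have heq : ⟪ξ, (T - x) ξ⟫ = (((d ξ - (⟪ξ, x ξ⟫).re : ℝ)) : ℂ) := by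
      rw [ContinuousLinearMap.sub_apply, inner_sub_right, h_inner_T]
      rw [him0 x hx ξ]
      push_cast
      simp
    rw [heq, Complex.zero_le_real, sub_nonneg]
    exact hd_le ξ x hx
  -- T is below every upper bound
  have hub : ∀ t : E →L[ℂ] E, (∀ x ∈ S, x ≤ t) → T ≤ t := by
    intro t ht
    rw [← opLE_iff_le]
    intro ξ
    obtain ⟨x₀, hx₀⟩ := hne
    have hx0t := opLE_iff_le.mpr (ht x₀ hx₀) ξ
    rw [ContinuousLinearMap.sub_apply, inner_sub_right] at hx0t
    obtain ⟨hre0, himt⟩ := complex_nonneg_iff.mp hx0t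
    have htim : (⟪ξ, t ξ⟫).im = 0 := by
      have hx0im : (⟪ξ, x₀ ξ⟫).im = 0 := by
        rw [him0 x₀ hx₀ ξ]; simp
      rw [Complex.sub_im, hx0im, sub_zero] at himt
      exact himt
    rw [ContinuousLinearMap.sub_apply, inner_sub_right, h_inner_T]
    rw [complex_nonneg_iff]
    constructor
    · rw [Complex.sub_re]
      simp only [Complex.ofReal_re]
      have := hd_ub ξ t ht
      linarith
    · rw [Complex.sub_im]
      simp [htim]
  obtain ⟨x₀, hx₀⟩ := hne
  have hT0 : (0:E →L[ℂ] E) ≤ T := le_trans (hpos x₀ hx₀) (hle x₀ hx₀)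
  refine ⟨T, hT0, hle, hub, ?_, ?_⟩
  · intro ξ ζ
    rw [hT_inner]
    exact hL ξ ζ
  · intro ξ ε hε
    have h1 : d ξ - ε < d ξ := by linarith
    obtain ⟨r, ⟨x, hx, rfl⟩, hr⟩ := exists_lt_of_lt_csSup (hneim ξ) h1
    refine ⟨x, hx, ?_⟩
    have h2 : (⟪ξ, T ξ⟫).re = d ξ := by rw [h_inner_T]; simp
    rw [h2]
    linarith

end NormalAux

/-! ### Main theorem -/

/-- If `M`, `N` are von Neumann algebras with cyclic unit vectors `Ω`, `Λ`
defining states `μ(a) = ⟨Ω, aΩ⟩` and `ν(b) = ⟨Λ, bΛ⟩`, with `ν` faithful, and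
`η : M → N` is a positive linear map satisfying `ν(η(a)*η(a)) ≤ μ(a*a)` for all `a ∈ M`,
then `η` is normal. -/
theorem normal_of_positive_schwarz
    (M : VonNeumannAlgebra H) (N : VonNeumannAlgebra K) (Ω : H) (Λ : K)
    (hΩunit : ‖Ω‖ = 1) (hΛunit : ‖Λ‖ = 1)
    (hΩcyc : Dense (Set.range fun a : ↥M => (a : H →L[ℂ] H) Ω))
    (hΛcyc : Dense (Set.range fun b : ↥N => (b : K →L[ℂ] K) Λ))
    (hνfaithful : ∀ b : ↥N, (inner ℂ Λ (((star b * b : ↥N) : K →L[ℂ] K) Λ) : ℂ) = 0 → b = 0)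
    (η : ↥M → ↥N) (hηlin : IsLinearMap ℂ η)
    (hηpos : ∀ a : ↥M, (∀ ξ : H, 0 ≤ (inner ℂ ξ ((a : H →L[ℂ] H) ξ) : ℂ)) →
      ∀ ξ : K, 0 ≤ (inner ℂ ξ ((η a : K →L[ℂ] K) ξ) : ℂ))
    (hschwarz : ∀ a : ↥M,
      (inner ℂ Λ (((star (η a) * η a : ↥N) : K →L[ℂ] K) Λ) : ℂ)
        ≤ (inner ℂ Ω (((star a * a : ↥M) : H →L[ℂ] H) Ω) : ℂ)) :
    IsNormalMap η := by
  classical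
  intro ι le hne hdir a s hsa hmono hlub
  obtain ⟨i₀⟩ := hne
  set η' : ↥M →ₗ[ℂ] ↥N := IsLinearMap.mk' η hηlin with hη'def
  have hηsub : ∀ x y : ↥M, η (x - y) = η x - η y := fun x y => map_sub η' x y
  have hmono' : ∀ x y : ↥M, (x : H →L[ℂ] H) ≤ (y : H →L[ℂ] H) →
      ((η x : ↥N) : K →L[ℂ] K) ≤ ((η y : ↥N) : K →L[ℂ] K) := by
    intro x y h
    have h0 : (0 : H →L[ℂ] H) ≤ ((y - x : ↥M) : H →L[ℂ] H) := by
      rw [AddSubgroupClass.coe_sub]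
      exact NormalAux.le_iff_sub_nonneg'.mp h
    have h1 := hηpos (y - x) (NormalAux.nonneg_iff_inner.mp h0)
    have h2 : (0 : K →L[ℂ] K) ≤ ((η (y - x) : ↥N) : K →L[ℂ] K) :=
      NormalAux.nonneg_iff_inner.mpr h1
    rw [hηsub, AddSubgroupClass.coe_sub] at h2
    exact NormalAux.le_iff_sub_nonneg'.mpr h2
  have hub0 : ∀ i, ((a i : ↥M) : H →L[ℂ] H) ≤ (s : H →L[ℂ] H) :=
    fun i => NormalAux.opLE_iff_le.mp (hlub.1 _ ⟨i, rfl⟩)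
  have hηub : ∀ i, ((η (a i) : ↥N) : K →L[ℂ] K) ≤ ((η s : ↥N) : K →L[ℂ] K) :=
    fun i => hmono' _ _ (hub0 i)
  have hmono2 : ∀ i j, le i j → ((a i : ↥M) : H →L[ℂ] H) ≤ ((a j : ↥M) : H →L[ℂ] H) :=
    fun i j h => NormalAux.opLE_iff_le.mp (hmono i j h)
  set Good : Set ι := {i | ((a i₀ : ↥M) : H →L[ℂ] H) ≤ ((a i : ↥M) : H →L[ℂ] H)} with hGoodDef
  have hmemGood : ∀ i, i ∈ Good ↔ ((a i₀ : ↥M) : H →L[ℂ] H) ≤ ((a i : ↥M) : H →L[ℂ] H) :=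
    fun i => Iff.rfl
  have hGood₀ : i₀ ∈ Good := (hmemGood i₀).mpr (le_refl _)
  have hGoodCof : ∀ i, ∃ k ∈ Good, ((a i : ↥M) : H →L[ℂ] H) ≤ ((a k : ↥M) : H →L[ℂ] H) := by
    intro i
    obtain ⟨k, hik, hi0k⟩ := hdir i i₀
    exact ⟨k, (hmemGood k).mpr (hmono2 _ _ hi0k), hmono2 _ _ hik⟩
  -- Step A : the increasing net `a i` (restricted to `Good`, shifted) in `B(H)`
  set S₁ : Set (H →L[ℂ] H) :=
    (fun i => ((a i : ↥M) : H →L[ℂ] H) - ((a i₀ : ↥M) : H →L[ℂ] H)) '' Good with hS₁def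
  have hS₁ne : S₁.Nonempty := ⟨_, ⟨i₀, hGood₀, rfl⟩⟩
  have hS₁dir : ∀ x ∈ S₁, ∀ y ∈ S₁, ∃ z ∈ S₁, x ≤ z ∧ y ≤ z := by
    rintro _ ⟨i, hi, rfl⟩ _ ⟨j, hj, rfl⟩
    obtain ⟨k, hik, hjk⟩ := hdir i j
    have hk : k ∈ Good := (hmemGood k).mpr (le_trans ((hmemGood i).mp hi) (hmono2 _ _ hik))
    exact ⟨_, ⟨k, hk, rfl⟩, NormalAux.sub_le_sub_right' (hmono2 _ _ hik) _,
      NormalAux.sub_le_sub_right' (hmono2 _ _ hjk) _⟩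
  have hS₁pos : ∀ x ∈ S₁, (0 : H →L[ℂ] H) ≤ x := by
    rintro _ ⟨i, hi, rfl⟩
    exact NormalAux.le_iff_sub_nonneg'.mp ((hmemGood i).mp hi)
  have hS₁ub : ∀ x ∈ S₁, x ≤ (s : H →L[ℂ] H) - ((a i₀ : ↥M) : H →L[ℂ] H) := by
    rintro _ ⟨i, hi, rfl⟩
    exact NormalAux.sub_le_sub_right' (hub0 i) _
  obtain ⟨T₁, hT₁0, hT₁ub, hT₁least, hT₁wot, hT₁eps⟩ :=
    NormalAux.exists_opLUB S₁ hS₁ne hS₁dir hS₁pos _ hS₁ub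
  have hsle : (s : H →L[ℂ] H) - ((a i₀ : ↥M) : H →L[ℂ] H) ≤ T₁ := by
    have hub : ∀ x ∈ (Set.range fun i => ((a i : ↥M) : H →L[ℂ] H)),
        OpLE x (T₁ + ((a i₀ : ↥M) : H →L[ℂ] H)) := by
      rintro _ ⟨i, rfl⟩
      rw [NormalAux.opLE_iff_le]
      obtain ⟨k, hk, hik⟩ := hGoodCof i
      have h2 : ((a k : ↥M) : H →L[ℂ] H) - ((a i₀ : ↥M) : H →L[ℂ] H) ≤ T₁ :=
        hT₁ub _ ⟨k, hk, rfl⟩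
      exact le_trans hik (NormalAux.sub_le_iff_le_add'.mp h2)
    have h := NormalAux.opLE_iff_le.mp (hlub.2 _ hub)
    exact NormalAux.sub_le_iff_le_add'.mpr h
  have hAeq : T₁ = (s : H →L[ℂ] H) - ((a i₀ : ↥M) : H →L[ℂ] H) :=
    le_antisymm (hT₁least _ hS₁ub) hsle
  have hA : ∀ ε : ℝ, 0 < ε → ∃ i ∈ Good,
      ((inner ℂ Ω (((s : H →L[ℂ] H) - ((a i : ↥M) : H →L[ℂ] H)) Ω) : ℂ)).re < ε := by
    intro ε hε
    obtain ⟨x, ⟨i, hi, rfl⟩, hx⟩ := hT₁eps Ω ε hε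
    refine ⟨i, hi, ?_⟩
    rw [hAeq] at hx
    rw [show (s : H →L[ℂ] H) - ((a i : ↥M) : H →L[ℂ] H) =
      ((s : H →L[ℂ] H) - ((a i₀ : ↥M) : H →L[ℂ] H)) -
        (((a i : ↥M) : H →L[ℂ] H) - ((a i₀ : ↥M) : H →L[ℂ] H)) from by abel,
      ContinuousLinearMap.sub_apply, inner_sub_right, Complex.sub_re]
    linarith
  -- Step B : the increasing net `η (a i)` in `B(K)`
  set S₂ : Set (K →L[ℂ] K) :=
    (fun i => ((η (a i) : ↥N) : K →L[ℂ] K) - ((η (a i₀) : ↥N) : K →L[ℂ] K)) '' Good with hS₂def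
  have hS₂ne : S₂.Nonempty := ⟨_, ⟨i₀, hGood₀, rfl⟩⟩
  have hS₂dir : ∀ x ∈ S₂, ∀ y ∈ S₂, ∃ z ∈ S₂, x ≤ z ∧ y ≤ z := by
    rintro _ ⟨i, hi, rfl⟩ _ ⟨j, hj, rfl⟩
    obtain ⟨k, hik, hjk⟩ := hdir i j
    have hk : k ∈ Good := (hmemGood k).mpr (le_trans ((hmemGood i).mp hi) (hmono2 _ _ hik))
    exact ⟨_, ⟨k, hk, rfl⟩,
      NormalAux.sub_le_sub_right' (hmono' _ _ (hmono2 _ _ hik)) _,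
      NormalAux.sub_le_sub_right' (hmono' _ _ (hmono2 _ _ hjk)) _⟩
  have hS₂pos : ∀ x ∈ S₂, (0 : K →L[ℂ] K) ≤ x := by
    rintro _ ⟨i, hi, rfl⟩
    exact NormalAux.le_iff_sub_nonneg'.mp (hmono' _ _ ((hmemGood i).mp hi))
  have hS₂ub : ∀ x ∈ S₂, x ≤ ((η s : ↥N) : K →L[ℂ] K) - ((η (a i₀) : ↥N) : K →L[ℂ] K) := by
    rintro _ ⟨i, hi, rfl⟩
    exact NormalAux.sub_le_sub_right' (hηub i) _
  obtain ⟨T₂, hT₂0, hT₂ub, hT₂least, hT₂wot, hT₂eps⟩ :=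
    NormalAux.exists_opLUB S₂ hS₂ne hS₂dir hS₂pos _ hS₂ub
  set cop : K →L[ℂ] K :=
    (((η s : ↥N) : K →L[ℂ] K) - ((η (a i₀) : ↥N) : K →L[ℂ] K)) - T₂ with hcopdef
  have hcop0 : (0 : K →L[ℂ] K) ≤ cop :=
    NormalAux.le_iff_sub_nonneg'.mp (hT₂least _ hS₂ub)
  haveI : (NormalAux.opNetFilter S₂).NeBot := NormalAux.opNetFilter_neBot hS₂ne hS₂dir
  have hT₂comm : ∀ z ∈ Set.centralizer (N : Set (K →L[ℂ] K)), T₂ * z = z * T₂ := by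
    intro z hz
    have hzc := Set.mem_centralizer_iff.mp hz
    refine ContinuousLinearMap.ext fun ζ => ?_
    refine ext_inner_left ℂ fun ξ => ?_
    have l1 := hT₂wot ξ (z ζ)
    have l2 := hT₂wot ((ContinuousLinearMap.adjoint z) ξ) ζ
    have heq : ∀ᶠ y in NormalAux.opNetFilter S₂,
        (inner ℂ ξ (y (z ζ)) : ℂ) = (inner ℂ ((ContinuousLinearMap.adjoint z) ξ) (y ζ) : ℂ) := by
      filter_upwards [NormalAux.self_mem_opNetFilter hS₂ne] with y hy
      obtain ⟨i, hi, rfl⟩ := hy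
      have h1 := hzc _ (SetLike.mem_coe.mpr (η (a i)).2)
      have h2 := hzc _ (SetLike.mem_coe.mpr (η (a i₀)).2)
      have hyz : ((((η (a i) : ↥N) : K →L[ℂ] K) - ((η (a i₀) : ↥N) : K →L[ℂ] K))) * z =
          z * (((η (a i) : ↥N) : K →L[ℂ] K) - ((η (a i₀) : ↥N) : K →L[ℂ] K)) := by
        rw [sub_mul, mul_sub, h1, h2]
      have h3 : (((η (a i) : ↥N) : K →L[ℂ] K) - ((η (a i₀) : ↥N) : K →L[ℂ] K)) (z ζ) =
          z ((((η (a i) : ↥N) : K →L[ℂ] K) - ((η (a i₀) : ↥N) : K →L[ℂ] K)) ζ) := by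
        have h4 := congrArg (fun T : K →L[ℂ] K => T ζ) hyz
        simpa [ContinuousLinearMap.mul_apply] using h4
      rw [h3, ContinuousLinearMap.adjoint_inner_left]
    have h5 := tendsto_nhds_unique_of_eventuallyEq l1 l2 heq
    calc (inner ℂ ξ ((T₂ * z) ζ) : ℂ) = (inner ℂ ξ (T₂ (z ζ)) : ℂ) := by
          rw [ContinuousLinearMap.mul_apply]
      _ = (inner ℂ ((ContinuousLinearMap.adjoint z) ξ) (T₂ ζ) : ℂ) := h5
      _ = (inner ℂ ξ (z (T₂ ζ)) : ℂ) := ContinuousLinearMap.adjoint_inner_left z (T₂ ζ) ξ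
      _ = (inner ℂ ξ ((z * T₂) ζ) : ℂ) := by rw [ContinuousLinearMap.mul_apply]
  have hcopmem : cop ∈ (N : Set (K →L[ℂ] K)) := by
    rw [← N.centralizer_centralizer, Set.mem_centralizer_iff]
    intro z hz
    have hzc := Set.mem_centralizer_iff.mp hz
    have h1 := hzc _ (SetLike.mem_coe.mpr (η s).2)
    have h2 := hzc _ (SetLike.mem_coe.mpr (η (a i₀)).2)
    have h3 := hT₂comm z hz
    rw [hcopdef, sub_mul, sub_mul, mul_sub, mul_sub, h1, h2, h3]
  set bN : ↥N := ⟨cop, hcopmem⟩ with hbNdef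
  set C : ℝ := ‖(s : H →L[ℂ] H) - ((a i₀ : ↥M) : H →L[ℂ] H)‖ with hCdef
  have hC0 : 0 ≤ C := norm_nonneg _
  have hkey : ∀ ε : ℝ, 0 < ε → ((inner ℂ Λ (cop Λ) : ℂ)).re ^ 2 ≤ C * ε := by
    intro ε hε
    obtain ⟨i, hi, hiε⟩ := hA ε hε
    set dOp : H →L[ℂ] H := (s : H →L[ℂ] H) - ((a i : ↥M) : H →L[ℂ] H) with hdOp
    set cOp : K →L[ℂ] K := ((η s : ↥N) : K →L[ℂ] K) - ((η (a i) : ↥N) : K →L[ℂ] K) with hcOp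
    have hd0 : (0 : H →L[ℂ] H) ≤ dOp := NormalAux.le_iff_sub_nonneg'.mp (hub0 i)
    have hdC : ‖dOp‖ ≤ C :=
      NormalAux.norm_le_of_le hd0 (NormalAux.sub_le_sub_left' ((hmemGood i).mp hi) _)
    have hc2 : ((η (s - a i) : ↥N) : K →L[ℂ] K) = cOp := by
      rw [hηsub, AddSubgroupClass.coe_sub]
    have hL1 : ((star (η (s - a i)) * η (s - a i) : ↥N) : K →L[ℂ] K) =
        (ContinuousLinearMap.adjoint cOp) * cOp := by
      rw [MulMemClass.coe_mul,
        show ((star (η (s - a i)) : ↥N) : K →L[ℂ] K) = star ((η (s - a i) : ↥N) : K →L[ℂ] K)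
          from rfl,
        hc2, ContinuousLinearMap.star_eq_adjoint]
    have hR1 : ((star (s - a i) * (s - a i) : ↥M) : H →L[ℂ] H) =
        (ContinuousLinearMap.adjoint dOp) * dOp := by
      rw [MulMemClass.coe_mul,
        show ((star (s - a i) : ↥M) : H →L[ℂ] H) = star (((s - a i) : ↥M) : H →L[ℂ] H)
          from rfl,
        AddSubgroupClass.coe_sub, ContinuousLinearMap.star_eq_adjoint]
    have hsw := hschwarz (s - a i)
    rw [hL1, hR1] at hsw
    have hswL : (inner ℂ Λ (((ContinuousLinearMap.adjoint cOp) * cOp) Λ) : ℂ) =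
        (inner ℂ (cOp Λ) (cOp Λ) : ℂ) := by
      rw [ContinuousLinearMap.mul_apply]
      exact ContinuousLinearMap.adjoint_inner_right cOp Λ (cOp Λ)
    have hswR : (inner ℂ Ω (((ContinuousLinearMap.adjoint dOp) * dOp) Ω) : ℂ) =
        (inner ℂ (dOp Ω) (dOp Ω) : ℂ) := by
      rw [ContinuousLinearMap.mul_apply]
      exact ContinuousLinearMap.adjoint_inner_right dOp Ω (dOp Ω)
    rw [hswL, hswR] at hsw
    have h7 : ‖cOp Λ‖ ^ 2 ≤ ‖dOp Ω‖ ^ 2 := by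
      have h7' := (Complex.le_def.mp hsw).1
      rwa [NormalAux.re_inner_self, NormalAux.re_inner_self] at h7'
    have hcople : cop ≤ cOp := by
      have h8 : ((η (a i) : ↥N) : K →L[ℂ] K) - ((η (a i₀) : ↥N) : K →L[ℂ] K) ≤ T₂ :=
        hT₂ub _ ⟨i, hi, rfl⟩
      have h9 := NormalAux.sub_le_sub_left' h8
        (((η s : ↥N) : K →L[ℂ] K) - ((η (a i₀) : ↥N) : K →L[ℂ] K))
      rw [show (((η s : ↥N) : K →L[ℂ] K) - ((η (a i₀) : ↥N) : K →L[ℂ] K)) -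
        (((η (a i) : ↥N) : K →L[ℂ] K) - ((η (a i₀) : ↥N) : K →L[ℂ] K)) = cOp from by
          rw [hcOp]; abel] at h9
      exact h9
    have h5 : ((inner ℂ Λ (cop Λ) : ℂ)).re ≤ ((inner ℂ Λ (cOp Λ) : ℂ)).re :=
      NormalAux.re_form_mono hcople Λ
    have h6 : ((inner ℂ Λ (cOp Λ) : ℂ)).re ≤ ‖cOp Λ‖ := by
      calc ((inner ℂ Λ (cOp Λ) : ℂ)).re ≤ ‖(inner ℂ Λ (cOp Λ) : ℂ)‖ := NormalAux.re_le_norm' _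
        _ ≤ ‖Λ‖ * ‖cOp Λ‖ := norm_inner_le_norm _ _
        _ = ‖cOp Λ‖ := by rw [hΛunit, one_mul]
    have h8 : ‖dOp Ω‖ ^ 2 ≤ ‖dOp‖ * ((inner ℂ Ω (dOp Ω) : ℂ)).re :=
      NormalAux.apply_norm_sq_le hd0 Ω
    have h9 : ‖dOp‖ * ((inner ℂ Ω (dOp Ω) : ℂ)).re ≤ C * ε :=
      mul_le_mul hdC (le_of_lt hiε) (NormalAux.form_nonneg_of_nonneg hd0 Ω) hC0
    have h10 : 0 ≤ ((inner ℂ Λ (cop Λ) : ℂ)).re := NormalAux.form_nonneg_of_nonneg hcop0 Λ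
    nlinarith [h5, h6, h7, h8, h9, h10, norm_nonneg (cOp Λ)]
  have hreΛ : ((inner ℂ Λ (cop Λ) : ℂ)).re = 0 := by
    have h10 : 0 ≤ ((inner ℂ Λ (cop Λ) : ℂ)).re := NormalAux.form_nonneg_of_nonneg hcop0 Λ
    have hsq : ((inner ℂ Λ (cop Λ) : ℂ)).re ^ 2 ≤ 0 := by
      refine le_of_forall_pos_le_add ?_
      intro ε hε
      have h1 := hkey (ε / (C + 1)) (by positivity)
      have h2 : C * (ε / (C + 1)) ≤ ε := by
        rw [div_eq_inv_mul, ← mul_assoc]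
        have h3 : C * (C + 1)⁻¹ ≤ 1 := by
          rw [mul_inv_le_iff₀ (by linarith), one_mul]
          linarith
        nlinarith [le_of_lt hε]
      linarith
    nlinarith [sq_nonneg ((inner ℂ Λ (cop Λ) : ℂ)).re, hsq, h10]
  have hcopΛ : cop Λ = 0 := by
    have h1 : ‖cop Λ‖ ^ 2 ≤ ‖cop‖ * ((inner ℂ Λ (cop Λ) : ℂ)).re :=
      NormalAux.apply_norm_sq_le hcop0 Λ
    rw [hreΛ, mul_zero] at h1
    have h2 : ‖cop Λ‖ = 0 := by nlinarith [norm_nonneg (cop Λ)]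
    exact norm_eq_zero.mp h2
  have hb0 : bN = 0 := by
    apply hνfaithful
    have hstar : ((star bN * bN : ↥N) : K →L[ℂ] K) =
        (ContinuousLinearMap.adjoint cop) * cop := by
      rw [MulMemClass.coe_mul,
        show ((star bN : ↥N) : K →L[ℂ] K) = star ((bN : ↥N) : K →L[ℂ] K) from rfl,
        ContinuousLinearMap.star_eq_adjoint]
    rw [hstar, ContinuousLinearMap.mul_apply]
    rw [show ((bN : ↥N) : K →L[ℂ] K) Λ = cop Λ from rfl, hcopΛ, map_zero, inner_zero_right]
  have hcop_eq : cop = 0 := by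
    have h := congrArg (fun b : ↥N => ((b : ↥N) : K →L[ℂ] K)) hb0
    exact h
  have hT₂eq : T₂ = ((η s : ↥N) : K →L[ℂ] K) - ((η (a i₀) : ↥N) : K →L[ℂ] K) := by
    rw [hcopdef] at hcop_eq
    exact (sub_eq_zero.mp hcop_eq).symm
  constructor
  · rintro x ⟨i, rfl⟩
    exact NormalAux.opLE_iff_le.mpr (hηub i)
  · intro t ht
    rw [NormalAux.opLE_iff_le]
    have ht' : ∀ x ∈ S₂, x ≤ t - ((η (a i₀) : ↥N) : K →L[ℂ] K) := by
      rintro _ ⟨i, hi, rfl⟩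
      exact NormalAux.sub_le_sub_right' (NormalAux.opLE_iff_le.mp (ht _ ⟨i, rfl⟩)) _
    have h2 := hT₂least _ ht'
    rw [hT₂eq] at h2
    exact NormalAux.sub_le_sub_iff_right'.mp h2
end
end

section
/- Let M ⊆ B(H) and N ⊆ B(K) be von Neumann algebras with cyclic and separating unit vectors Ω ∈ H and Λ ∈ K, defining faithful normal states μ(a) = ⟨Ω, aΩ⟩ and ν(b) = ⟨Λ, bΛ⟩. Let J_μ : H → H and J_ν : K → K be conjugate-linear isometric involutions satisfying J_μΩ = Ω, J_νΛ = Λ, J_μ M J_μ = M′ and J_ν N J_ν = N′ (the defining properties of the modular conjugations of Tomita–Takesaki theory), and set j_μ(x) = J_μ x* J_μ and j_ν(y) = J_ν y* J_ν. Let η : M → N be a positive linear map with ν ∘ η = μ, with dual η′ : N′ → M′. Then the positive map j_ν ∘ η ∘ j_μ : M′ → N′ satisfies ⟨Ω, a′ (j_μ ∘ η′ ∘ j_ν)(b) Ω⟩ = ⟨Λ, (j_ν ∘ η ∘ j_μ)(a′) b Λ⟩ for all a′ ∈ M′ and b ∈ N; that is, the dual of j_ν ∘ η ∘ j_μ (with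 respect to μ′ and ν′) equals j_μ ∘ η′ ∘ j_ν. -/
open scoped ComplexOrder

noncomputable section

variable {H K : Type} [NormedAddCommGroup H] [InnerProductSpace ℂ H] [CompleteSpace H]
  [NormedAddCommGroup K] [InnerProductSpace ℂ K] [CompleteSpace K]

/-- Given a conjugate-linear continuous map `J : H → H`, the map `j(x) = J x* J` on `B(H)`. -/
def jmap {H : Type} [NormedAddCommGroup H] [InnerProductSpace ℂ H] [CompleteSpace H]
    (J : H →L⋆[ℂ] H) (x : H →L[ℂ] H) : H →L[ℂ] H :=
  J.comp ((ContinuousLinearMap.adjoint x).comp J)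

/-- A conjugate-linear isometry is "antiunitary": it flips inner products. -/
lemma antiunitary_inner {H : Type} [NormedAddCommGroup H] [InnerProductSpace ℂ H]
    (J : H →L⋆[ℂ] H) (hiso : ∀ x : H, ‖J x‖ = ‖x‖) (x y : H) :
    (inner ℂ (J x) (J y) : ℂ) = inner ℂ y x := by
  have hI : ((starRingEnd ℂ) Complex.I) = -Complex.I := Complex.conj_I
  have n1 : ‖J x + J y‖ = ‖x + y‖ := by rw [← map_add, hiso]
  have n2 : ‖J x - J y‖ = ‖x - y‖ := by rw [← map_sub, hiso]
  have n3 : ‖J x - Complex.I • J y‖ = ‖x + Complex.I • y‖ := by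
    rw [← hiso (x + Complex.I • y), map_add, map_smulₛₗ, hI, neg_smul, ← sub_eq_add_neg]
  have n4 : ‖J x + Complex.I • J y‖ = ‖x - Complex.I • y‖ := by
    rw [← hiso (x - Complex.I • y), map_sub, map_smulₛₗ, hI, neg_smul, sub_neg_eq_add]
  have n5 : ‖y + x‖ = ‖x + y‖ := by rw [add_comm]
  have n6 : ‖y - x‖ = ‖x - y‖ := norm_sub_rev _ _
  have n7 : ‖y - Complex.I • x‖ = ‖x + Complex.I • y‖ := by
    have h : Complex.I • (y - Complex.I • x) = x + Complex.I • y := by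
      rw [smul_sub, smul_smul, Complex.I_mul_I, neg_one_smul, sub_neg_eq_add, add_comm]
    rw [← h, norm_smul, Complex.norm_I, one_mul]
  have n8 : ‖y + Complex.I • x‖ = ‖x - Complex.I • y‖ := by
    have h : Complex.I • (x - Complex.I • y) = y + Complex.I • x := by
      rw [smul_sub, smul_smul, Complex.I_mul_I, neg_one_smul, sub_neg_eq_add, add_comm]
    rw [← h, norm_smul, Complex.norm_I, one_mul]
  rw [inner_eq_sum_norm_sq_div_four, inner_eq_sum_norm_sq_div_four,
    RCLike.I_to_complex, n1, n2, n3, n4, n5, n6, n7, n8]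

/-- `⟨x, J y⟩ = ⟨y, J x⟩` for an antiunitary involution. -/
lemma inner_J_right {H : Type} [NormedAddCommGroup H] [InnerProductSpace ℂ H]
    (J : H →L⋆[ℂ] H) (hinv : ∀ x : H, J (J x) = x) (hiso : ∀ x : H, ‖J x‖ = ‖x‖)
    (x y : H) : (inner ℂ x (J y) : ℂ) = inner ℂ y (J x) := by
  conv_lhs => rw [← hinv x]
  rw [antiunitary_inner J hiso]

/-- `⟨J x, y⟩ = ⟨J y, x⟩` for an antiunitary involution. -/
lemma inner_J_left {H : Type} [NormedAddCommGroup H] [InnerProductSpace ℂ H]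
    (J : H →L⋆[ℂ] H) (hinv : ∀ x : H, J (J x) = x) (hiso : ∀ x : H, ‖J x‖ = ‖x‖)
    (x y : H) : (inner ℂ (J x) y : ℂ) = inner ℂ (J y) x := by
  conv_lhs => rw [← hinv y]
  rw [antiunitary_inner J hiso]

/-- With `J_μ`, `J_ν` the modular conjugations for `(M, Ω)` and `(N, Λ)`,
and `η : M → N` positive, state-preserving, with dual `η′ : N′ → M′`, the positive map
`j_ν ∘ η ∘ j_μ : M′ → N′` has dual `j_μ ∘ η′ ∘ j_ν`; that is,
`⟨Ω, a′ (j_μ ∘ η′ ∘ j_ν)(b) Ω⟩ = ⟨Λ, (j_ν ∘ η ∘ j_μ)(a′) b Λ⟩` for all `a′ ∈ M′`, `b ∈ N`. -/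
theorem dual_of_kms_conjugate
    (M : VonNeumannAlgebra H) (N : VonNeumannAlgebra K)
    (Ω : H) (Λ : K) (hΩunit : ‖Ω‖ = 1) (hΛunit : ‖Λ‖ = 1)
    (hΩcyc : Dense (Set.range fun a : ↥M => (a : H →L[ℂ] H) Ω))
    (hΩsep : ∀ a : ↥M, (a : H →L[ℂ] H) Ω = 0 → a = 0)
    (hΛcyc : Dense (Set.range fun b : ↥N => (b : K →L[ℂ] K) Λ))
    (hΛsep : ∀ b : ↥N, (b : K →L[ℂ] K) Λ = 0 → b = 0)
    -- modular conjugations: conjugate-linear isometric involutions fixing the cyclic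
    -- vectors, with `J_μ M J_μ = M′` and `J_ν N J_ν = N′`
    (Jμ : H →L⋆[ℂ] H) (Jν : K →L⋆[ℂ] K)
    (hJμinv : ∀ x : H, Jμ (Jμ x) = x) (hJμiso : ∀ x : H, ‖Jμ x‖ = ‖x‖) (hJμΩ : Jμ Ω = Ω)
    (hJνinv : ∀ y : K, Jν (Jν y) = y) (hJνiso : ∀ y : K, ‖Jν y‖ = ‖y‖) (hJνΛ : Jν Λ = Λ)
    (hJμM : (fun x => jmap Jμ x) '' (M : Set (H →L[ℂ] H)) = (M.commutant : Set (H →L[ℂ] H)))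
    (hJνN : (fun y => jmap Jν y) '' (N : Set (K →L[ℂ] K)) = (N.commutant : Set (K →L[ℂ] K)))
    (η : ↥M → ↥N) (hηlin : IsLinearMap ℂ η)
    (hηpos : ∀ a : ↥M, (∀ ξ : H, 0 ≤ (inner ℂ ξ ((a : H →L[ℂ] H) ξ) : ℂ)) →
      ∀ ξ : K, 0 ≤ (inner ℂ ξ ((η a : K →L[ℂ] K) ξ) : ℂ))
    (hstate : ∀ a : ↥M,
      (inner ℂ Λ ((η a : K →L[ℂ] K) Λ) : ℂ) = inner ℂ Ω ((a : H →L[ℂ] H) Ω))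
    -- the dual `η′ : N′ → M′` of `η`
    (η' : ↥N.commutant → ↥M.commutant)
    (hη' : ∀ (a : ↥M) (b' : ↥N.commutant),
      (inner ℂ Ω ((a : H →L[ℂ] H) ((η' b' : H →L[ℂ] H) Ω)) : ℂ)
        = inner ℂ Λ ((η a : K →L[ℂ] K) ((b' : K →L[ℂ] K) Λ))) :
    -- `j_ν ∘ η ∘ j_μ` maps `M′` into `N′` ...
    (∀ (a' : ↥M.commutant) (a : ↥M), (a : H →L[ℂ] H) = jmap Jμ (a' : H →L[ℂ] H) →
      jmap Jν (η a : K →L[ℂ] K) ∈ N.commutant) ∧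
    -- ... and its dual is `j_μ ∘ η′ ∘ j_ν`
    (∀ (a' : ↥M.commutant) (b : ↥N) (a : ↥M) (b'' : ↥N.commutant),
      (a : H →L[ℂ] H) = jmap Jμ (a' : H →L[ℂ] H) →
      (b'' : K →L[ℂ] K) = jmap Jν (b : K →L[ℂ] K) →
      (inner ℂ Ω ((a' : H →L[ℂ] H) ((jmap Jμ (η' b'' : H →L[ℂ] H)) Ω)) : ℂ)
        = inner ℂ Λ ((jmap Jν (η a : K →L[ℂ] K)) ((b : K →L[ℂ] K) Λ))) := by
  constructor
  · intro a' a _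
    have hmem : (↑(η a) : K →L[ℂ] K) ∈ (N : Set (K →L[ℂ] K)) := (η a).2
    have : jmap Jν (↑(η a) : K →L[ℂ] K) ∈ (N.commutant : Set (K →L[ℂ] K)) := by
      rw [← hJνN]; exact Set.mem_image_of_mem _ hmem
    exact this
  · intro a' b a b'' ha hb
    set A' : H →L[ℂ] H := (a' : H →L[ℂ] H) with hA'
    set A : H →L[ℂ] H := (a : H →L[ℂ] H) with hA
    set B : K →L[ℂ] K := (b : K →L[ℂ] K) with hB
    set B'' : K →L[ℂ] K := (b'' : K →L[ℂ] K) with hB''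
    set C' : H →L[ℂ] H := ((η' b'' : ↥M.commutant) : H →L[ℂ] H) with hC'
    set D : K →L[ℂ] K := ((η a : ↥N) : K →L[ℂ] K) with hD
    have hcommH : A * C' = C' * A :=
      (VonNeumannAlgebra.mem_commutant_iff.mp (η' b'').2) A a.2
    have hcommK : D * B'' = B'' * D :=
      (VonNeumannAlgebra.mem_commutant_iff.mp b''.2) D (η a).2
    have hAΩ : Jμ ((ContinuousLinearMap.adjoint A') Ω) = A Ω := by
      rw [ha]; simp [jmap, hJμΩ]
    calc (inner ℂ Ω (A' ((jmap Jμ C') Ω)) : ℂ)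
        = inner ℂ Ω (A' (Jμ ((ContinuousLinearMap.adjoint C') Ω))) := by
          simp [jmap, hJμΩ]
      _ = inner ℂ ((ContinuousLinearMap.adjoint A') Ω)
            (Jμ ((ContinuousLinearMap.adjoint C') Ω)) :=
          (ContinuousLinearMap.adjoint_inner_left A' _ Ω).symm
      _ = inner ℂ ((ContinuousLinearMap.adjoint C') Ω)
            (Jμ ((ContinuousLinearMap.adjoint A') Ω)) :=
          inner_J_right Jμ hJμinv hJμiso _ _
      _ = inner ℂ ((ContinuousLinearMap.adjoint C') Ω) (A Ω) := by rw [hAΩ]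
      _ = inner ℂ Ω (C' (A Ω)) := ContinuousLinearMap.adjoint_inner_left C' _ Ω
      _ = inner ℂ Ω (A (C' Ω)) := by
          rw [← ContinuousLinearMap.mul_apply, ← hcommH, ContinuousLinearMap.mul_apply]
      _ = inner ℂ Λ (D (B'' Λ)) := hη' a b''
      _ = inner ℂ Λ (B'' (D Λ)) := by
          rw [← ContinuousLinearMap.mul_apply, hcommK, ContinuousLinearMap.mul_apply]
      _ = inner ℂ Λ (Jν ((ContinuousLinearMap.adjoint B) (Jν (D Λ)))) := by
          rw [hb]; simp [jmap]
      _ = inner ℂ ((ContinuousLinearMap.adjoint B) (Jν (D Λ))) (Jν Λ) :=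
          inner_J_right Jν hJνinv hJνiso _ _
      _ = inner ℂ ((ContinuousLinearMap.adjoint B) (Jν (D Λ))) Λ := by rw [hJνΛ]
      _ = inner ℂ (Jν (D Λ)) (B Λ) := ContinuousLinearMap.adjoint_inner_left B Λ _
      _ = inner ℂ (Jν (B Λ)) (D Λ) := inner_J_left Jν hJνinv hJνiso _ _
      _ = inner ℂ ((ContinuousLinearMap.adjoint D) (Jν (B Λ))) Λ :=
          (ContinuousLinearMap.adjoint_inner_left D Λ _).symm
      _ = inner ℂ ((ContinuousLinearMap.adjoint D) (Jν (B Λ))) (Jν Λ) := by rw [hJνΛ]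
      _ = inner ℂ Λ (Jν ((ContinuousLinearMap.adjoint D) (Jν (B Λ)))) :=
          (inner_J_right Jν hJνinv hJνiso _ _).symm
      _ = inner ℂ Λ ((jmap Jν D) (B Λ)) := by simp [jmap]
end
end
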